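/- Let λ < 1, g ≥ 0, ε ∈ [0,1], n ≥ 2, and consider the Markov chain Q on ℤ_+^n for the Po2-(g,ε) scheme (arrivals at rate nλ, uniform pair sampling, join probability p(Q_i,Q_j) = 1{Q_j−Q_i ≥ g+1} + (1−ε)1{0<Q_j−Q_i≤g} + ε1{0<Q_i−Q_j≤g} + 1{Q_i=Q_j, i<j}, unit service rates). Then the drift of V(Q) = Σ_i Q_i² satisfies D V(Q) ≤ 2(λ−1)Σ_i Q_i + 2nλg·1{ε>1/2} + nλ + B(Q), where B(Q) = Σ_i 1{Q_i > 0}. -/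

import Mathlib

open Finset

/-- Join probability under the Po2-(g,ε) scheme. -/
noncomputable def pGE (g : ℕ) (ε : ℝ) {n : ℕ} (qi qj : ℕ) (i j : Fin n) : ℝ :=
  (if (g : ℤ) + 1 ≤ (qj : ℤ) - (qi : ℤ) then 1 else 0)
  + (1 - ε) * (if 0 < (qj : ℤ) - (qi : ℤ) ∧ (qj : ℤ) - (qi : ℤ) ≤ (g : ℤ) then 1 else 0)
  + ε * (if 0 < (qi : ℤ) - (qj : ℤ) ∧ (qi : ℤ) - (qj : ℤ) ≤ (g : ℤ) then 1 else 0)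
  + (if qi = qj ∧ i < j then 1 else 0)

/-- Arrival rate to server i. -/
noncomputable def rPlusGE (lam : ℝ) (g : ℕ) (ε : ℝ) {n : ℕ} (Q : Fin n → ℕ) (i : Fin n) : ℝ :=
  (2 * lam / ((n : ℝ) - 1)) * ∑ j ∈ Finset.univ.erase i, pGE g ε (Q i) (Q j) i j

/-- Generator drift of the quadratic Lyapunov function `V(Q) = Σ_i Q_i²`. -/
noncomputable def driftQuadGE (lam : ℝ) (g : ℕ) (ε : ℝ) {n : ℕ} (Q : Fin n → ℕ) : ℝ :=
  ∑ i, (rPlusGE lam g ε Q i * (((Q i : ℝ) + 1)^2 - (Q i : ℝ)^2)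
    + (if 0 < Q i then (1 : ℝ) else 0) * (((Q i : ℝ) - 1)^2 - (Q i : ℝ)^2))

set_option maxHeartbeats 1000000 in
lemma pGE_pair_bound (g : ℕ) (ε : ℝ) (hε0 : 0 ≤ ε) (hε1 : ε ≤ 1) {n : ℕ} (a b : ℕ) (i j : Fin n)
    (hij : i ≠ j) :
    pGE g ε a b i j * (2*(a:ℝ)+1) + pGE g ε b a j i * (2*(b:ℝ)+1)
      ≤ (a:ℝ) + (b:ℝ) + 2*(g:ℝ)*(if ε > 1/2 then 1 else 0) + 1 := by
  have hvij : i < j ∨ j < i := lt_or_gt_of_ne hij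
  have hg : (0:ℝ) ≤ g := Nat.cast_nonneg g
  have hd : ((a:ℤ) = b ∧ (a:ℝ) = b) ∨ ((a:ℤ) < b ∧ (a:ℝ) < b) ∨ ((b:ℤ) < a ∧ (b:ℝ) < a) := by
    rcases lt_trichotomy a b with h | h | h
    · exact Or.inr (Or.inl ⟨by exact_mod_cast h, by exact_mod_cast h⟩)
    · exact Or.inl ⟨by exact_mod_cast h, by exact_mod_cast h⟩
    · exact Or.inr (Or.inr ⟨by exact_mod_cast h, by exact_mod_cast h⟩)
  have hgab : ((a:ℤ) + g < b ∧ (a:ℝ) + g ≤ b) ∨ ((b:ℤ) ≤ a + g ∧ (b:ℝ) ≤ a + g) := by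
    rcases lt_or_ge ((a:ℤ) + g) b with h | h
    · exact Or.inl ⟨h, by exact_mod_cast h.le⟩
    · exact Or.inr ⟨h, by exact_mod_cast h⟩
  have hgba : ((b:ℤ) + g < a ∧ (b:ℝ) + g ≤ a) ∨ ((a:ℤ) ≤ b + g ∧ (a:ℝ) ≤ b + g) := by
    rcases lt_or_ge ((b:ℤ) + g) a with h | h
    · exact Or.inl ⟨h, by exact_mod_cast h.le⟩
    · exact Or.inr ⟨h, by exact_mod_cast h⟩
  have hab : (a = b) ↔ ((a:ℤ) = b) := by exact_mod_cast Iff.rfl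
  unfold pGE
  rcases hvij with h | h <;>
    simp only [h, not_lt_of_gt h, and_true, and_false, if_false, hab] <;>
    rcases hd with ⟨h1,h1'⟩ | ⟨h1,h1'⟩ | ⟨h1,h1'⟩ <;>
    rcases hgab with ⟨h2,h2'⟩ | ⟨h2,h2'⟩ <;>
    rcases hgba with ⟨h3,h3'⟩ | ⟨h3,h3'⟩ <;>
    split_ifs <;>
    first
      | omega
      | linarith
      | nlinarith [mul_nonneg hε0 (sub_nonneg.mpr h2'), mul_nonneg hε0 (sub_nonneg.mpr h3'),
          mul_nonneg (sub_nonneg.mpr hε1) (sub_nonneg.mpr h2'),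
          mul_nonneg (sub_nonneg.mpr hε1) (sub_nonneg.mpr h3')]

theorem po2ge_quadratic_drift_bound (lam : ℝ) (hlam0 : 0 ≤ lam) (hlam1 : lam < 1)
    (g : ℕ) (ε : ℝ) (hε0 : 0 ≤ ε) (hε1 : ε ≤ 1)
    (n : ℕ) (hn : 2 ≤ n) (Q : Fin n → ℕ) :
    driftQuadGE lam g ε Q
      ≤ 2 * (lam - 1) * ∑ i, (Q i : ℝ)
        + 2 * (n : ℝ) * lam * (g : ℝ) * (if ε > 1/2 then 1 else 0)
        + (n : ℝ) * lam + ∑ i, (if 0 < Q i then (1 : ℝ) else 0) := by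
  set I : ℝ := if ε > 1/2 then 1 else 0 with hI
  set T : ℝ := ∑ i, (Q i : ℝ) with hT
  set B : ℝ := ∑ i, (if 0 < Q i then (1 : ℝ) else 0) with hB
  set F : Fin n → Fin n → ℝ := fun i j => pGE g ε (Q i) (Q j) i j * (2*(Q i : ℝ)+1) with hF
  set A : ℝ := ∑ i, ∑ j ∈ Finset.univ.erase i, F i j with hA
  have hX : (1:ℝ) ≤ (n:ℝ) - 1 := by
    have : (2:ℝ) ≤ n := by exact_mod_cast hn
    linarith
  have hX0 : ((n:ℝ) - 1) ≠ 0 := by linarith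
  set c : ℝ := 2*(g:ℝ)*I + 1 with hc
  clear_value I T B F A c
  -- swap the double sum
  have hswap : (∑ i, ∑ j ∈ Finset.univ.erase i, F j i) = A := by
    rw [hA]
    exact Finset.sum_comm' (f := fun i j => F j i) (fun x y => by
      simp only [Finset.mem_erase, Finset.mem_univ, and_true, true_and, ne_eq]
      tauto)
  -- bound 2A
  have h2A : 2 * A ≤ 2 * (((n:ℝ)-1) * T) + (n:ℝ) * ((n:ℝ)-1) * c := by
    have hsum : 2 * A = ∑ i, ∑ j ∈ Finset.univ.erase i, (F i j + F j i) := by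
      have : (∑ i, ∑ j ∈ Finset.univ.erase i, (F i j + F j i))
          = (∑ i, ∑ j ∈ Finset.univ.erase i, F i j)
            + (∑ i, ∑ j ∈ Finset.univ.erase i, F j i) := by
        rw [← Finset.sum_add_distrib]
        congr 1; ext i; rw [← Finset.sum_add_distrib]
      rw [this, hswap, ← hA]; ring
    have hb : (∑ i, ∑ j ∈ Finset.univ.erase i, (F i j + F j i))
        ≤ ∑ i, ∑ j ∈ Finset.univ.erase i, ((Q i : ℝ) + (Q j : ℝ) + c) := by
      refine Finset.sum_le_sum (fun i _ => Finset.sum_le_sum (fun j hj => ?_))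
      have hji : i ≠ j := fun h => (Finset.mem_erase.mp hj).1 h.symm
      have h := pGE_pair_bound g ε hε0 hε1 (Q i) (Q j) i j hji
      simp only [hF]
      rw [hc, hI]; linarith [h]
    have hval : (∑ i, ∑ j ∈ Finset.univ.erase i, ((Q i : ℝ) + (Q j : ℝ) + c))
        = 2 * (((n:ℝ)-1) * T) + (n:ℝ) * ((n:ℝ)-1) * c := by
      have hcard : ∀ i : Fin n, ((Finset.univ.erase i).card : ℝ) = (n:ℝ) - 1 := by
        intro i
        rw [Finset.card_erase_of_mem (Finset.mem_univ i), Finset.card_univ, Fintype.card_fin]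
        have h1 : 1 ≤ n := le_trans (by norm_num) hn
        push_cast [Nat.cast_sub h1]
        ring
      have hinner : ∀ i : Fin n, (∑ j ∈ Finset.univ.erase i, ((Q i : ℝ) + (Q j : ℝ) + c))
          = ((n:ℝ)-1) * ((Q i : ℝ) + c) + (T - (Q i : ℝ)) := by
        intro i
        rw [show (fun j => (Q i : ℝ) + (Q j : ℝ) + c) = (fun j => ((Q i : ℝ) + c) + (Q j : ℝ)) by
          ext j; ring]
        rw [Finset.sum_add_distrib, Finset.sum_const, nsmul_eq_mul, hcard,
          Finset.sum_erase_eq_sub (Finset.mem_univ i), ← hT]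
      rw [Finset.sum_congr rfl (fun i _ => hinner i)]
      simp only [Finset.sum_add_distrib, Finset.sum_sub_distrib, ← Finset.mul_sum,
        Finset.sum_const, Finset.card_univ, Fintype.card_fin, nsmul_eq_mul, ← hT]
      ring
    calc 2 * A ≤ ∑ i, ∑ j ∈ Finset.univ.erase i, ((Q i : ℝ) + (Q j : ℝ) + c) := by
          rw [hsum]; exact hb
      _ = _ := hval
  -- arrival part of the drift
  have harr : (∑ i, rPlusGE lam g ε Q i * (((Q i : ℝ) + 1)^2 - (Q i : ℝ)^2))
      = (2 * lam / ((n:ℝ) - 1)) * A := by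
    rw [hA, Finset.mul_sum]
    refine Finset.sum_congr rfl (fun i _ => ?_)
    rw [rPlusGE, mul_assoc, Finset.sum_mul]
    refine congrArg _ (Finset.sum_congr rfl (fun j _ => ?_))
    simp only [hF]; ring
  have harrb : (2 * lam / ((n:ℝ) - 1)) * A ≤ 2 * lam * T + (n:ℝ) * lam * c := by
    have hc0 : 0 ≤ 2 * lam / ((n:ℝ) - 1) := by positivity
    have hAle : A ≤ ((n:ℝ)-1) * (T + (n:ℝ) * c / 2) := by
      have h : ((n:ℝ)-1) * (T + (n:ℝ) * c / 2)
          = (2 * (((n:ℝ)-1) * T) + (n:ℝ) * ((n:ℝ)-1) * c) / 2 := by ring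
      rw [h]; linarith [h2A]
    calc (2 * lam / ((n:ℝ) - 1)) * A
        ≤ (2 * lam / ((n:ℝ) - 1)) * (((n:ℝ)-1) * (T + (n:ℝ) * c / 2)) :=
          mul_le_mul_of_nonneg_left hAle hc0
      _ = 2 * lam * T + (n:ℝ) * lam * c := by field_simp
  -- service part
  have hserv : (∑ i, (if 0 < Q i then (1 : ℝ) else 0) * (((Q i : ℝ) - 1)^2 - (Q i : ℝ)^2))
      = -2 * T + B := by
    rw [hT, hB, Finset.mul_sum, ← Finset.sum_add_distrib]
    refine Finset.sum_congr rfl (fun i _ => ?_)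
    rcases Nat.eq_zero_or_pos (Q i) with h | h
    · simp [h]
    · rw [if_pos h]; ring
  -- assemble
  have hdrift : driftQuadGE lam g ε Q = (2 * lam / ((n:ℝ) - 1)) * A + (-2 * T + B) := by
    rw [driftQuadGE, Finset.sum_add_distrib, harr, hserv]
  rw [hdrift]
  have : 2 * (lam - 1) * T + 2 * (n:ℝ) * lam * (g:ℝ) * I + (n:ℝ) * lam + B
      = (2 * lam * T + (n:ℝ) * lam * c) + (-2 * T + B) := by rw [hc]; ring
  rw [this]
  linarith [harrb]
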